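/- Let m ≥ 2, and for q = 1, …, m let H^{(q)} = [[Z^{(q)}, 0],[0, (Z^{(m−q+1)})ᵀ]] be 2n×2n block matrices built from n×n matrices Z^{(q)} = n^{-1/2}[Z_{jk}^{(q)}], with V_{[a,b]} = ∏_{k=a}^{b} H^{(k)} (and V_{[a,b]} = I when a > b), J = [[0, I],[I, 0]], V̂ = V_{[1,m]} J, and U(t) = e^{itV̂}. Then for all 1 ≤ j, k ≤ n and 1 ≤ x, y ≤ 2n, the partial derivative of the matrix exponential with respect to the entry Z_{jk}^{(1)} satisfies [∂U(t)/∂Z_{jk}^{(1)}]_{x,y} = (i/√n) · ([U·V_{[1,m−1]}]_{·, k+n} at row x convolved with [U]_{·, j} at row y)(t) + (i/√n) · ([U·V_{[1,m−1]}]_{·, k+n} at row y convolved with [U]_{·, j} at row x)(t), i.e. (i/√n)∫₀ᵗ ([U(s) V_{[1,m−1]}]_{x, k+n}[U(t−s)]_{y, j} + [U(s) V_{[1,m−1]}]_{y, k+n}[U(t−s)]_{x, j}) ds. -/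

import Mathlib

open Matrix MeasureTheory

noncomputable section

/-- `H^{(q)} = [[Z^{(q)}, 0],[0, (Z^{(m−q+1)})ᵀ]]` (with `n^{-1/2}` normalization);
in zero-based indexing `m − q + 1` corresponds to `Fin.rev q`. -/
def Hgen (m n : ℕ) (Z : Fin m → Fin n → Fin n → ℝ) (q : Fin m) :
    Matrix (Fin n ⊕ Fin n) (Fin n ⊕ Fin n) ℝ :=
  Matrix.fromBlocks ((Real.sqrt n)⁻¹ • Matrix.of (Z q)) 0 0
    ((Real.sqrt n)⁻¹ • Matrix.of (Z q.rev))ᵀ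

/-- `V_{[1,k]} = H^{(1)} ⋯ H^{(k)}` (the empty product for `k = 0`). -/
def Vtake (m n : ℕ) (Z : Fin m → Fin n → Fin n → ℝ) (k : ℕ) :
    Matrix (Fin n ⊕ Fin n) (Fin n ⊕ Fin n) ℝ :=
  ((List.ofFn (Hgen m n Z)).take k).prod

/-- `J = [[0, I],[I, 0]]`. -/
def Jmat (n : ℕ) : Matrix (Fin n ⊕ Fin n) (Fin n ⊕ Fin n) ℝ :=
  Matrix.fromBlocks 0 1 1 0

/-- `V̂ = V_{[1,m]} J`. -/
def hatVm (m n : ℕ) (Z : Fin m → Fin n → Fin n → ℝ) :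
    Matrix (Fin n ⊕ Fin n) (Fin n ⊕ Fin n) ℝ :=
  Vtake m n Z m * Jmat n

/-- `U(t) = e^{itV̂}`. -/
def UexpM (m n : ℕ) (Z : Fin m → Fin n → Fin n → ℝ) (t : ℝ) :
    Matrix (Fin n ⊕ Fin n) (Fin n ⊕ Fin n) ℂ :=
  NormedSpace.exp ((Complex.I * (t : ℂ)) • (hatVm m n Z).map Complex.ofReal)

/-- Replace the entry `Z^{(q₀)}_{jk}` by the real variable `u`. -/
def repEntry (m n : ℕ) (Z : Fin m → Fin n → Fin n → ℝ) (q₀ : Fin m) (j k : Fin n) (u : ℝ) :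
    Fin m → Fin n → Fin n → ℝ :=
  fun r a b => if r = q₀ ∧ a = j ∧ b = k then u else Z r a b

section RMTauxSection

namespace RMTaux

open NormedSpace

set_option linter.unnecessarySeqFocus false
set_option linter.unusedSectionVars false

attribute [local instance] Matrix.linftyOpNormedAddCommGroup Matrix.linftyOpNormedRing
  Matrix.linftyOpNormedAlgebra
attribute [-instance] instTopologicalSpaceMatrix Matrix.instUniformSpace

/-! ### Analytic part: Duhamel formula for the derivative of the matrix exponential -/

theorem _root_.HasDerivAt.comp_ofReal' {E : Type*} [NormedAddCommGroup E] [NormedSpace ℂ E]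
    {f : ℂ → E} {f' : E} {z : ℝ} (hf : HasDerivAt f f' (z : ℂ)) :
    HasDerivAt (fun x : ℝ => f x) f' z := by
  simpa [Function.comp_def] using hf.scomp z Complex.ofRealCLM.hasDerivAt

variable {N : Type*} [Fintype N] [DecidableEq N]

theorem duhamel (X Y : Matrix N N ℂ) :
    exp X - exp Y =
      ∫ σ in (0:ℝ)..1, exp ((σ : ℂ) • X) * (X - Y) * exp (((1 - σ : ℝ) : ℂ) • Y) := by
  have hF : ∀ σ : ℝ,
      HasDerivAt (fun σ : ℝ => exp ((σ : ℂ) • X) * exp (((1 - σ : ℝ) : ℂ) • Y))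
        (exp ((σ : ℂ) • X) * (X - Y) * exp (((1 - σ : ℝ) : ℂ) • Y)) σ := by
    intro σ
    have h1 : HasDerivAt (fun σ : ℝ => exp ((σ : ℂ) • X))
        (exp ((σ : ℂ) • X) * X) σ :=
      (hasDerivAt_exp_smul_const X (σ : ℂ)).comp_ofReal'
    have h2i : HasDerivAt (fun σ : ℝ => ((1 - σ : ℝ) : ℂ)) (((-1 : ℝ) : ℂ)) σ :=
      ((hasDerivAt_id σ).const_sub 1).ofReal_comp
    have h2 : HasDerivAt (fun σ : ℝ => exp (((1 - σ : ℝ) : ℂ) • Y))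
        ((((-1 : ℝ)) : ℂ) • (exp (((1 - σ : ℝ) : ℂ) • Y) * Y)) σ :=
      by
        have := (hasDerivAt_exp_smul_const Y (((1 - σ : ℝ)) : ℂ)).scomp σ h2i
        exact this
    have := h1.fun_mul h2
    refine this.congr_deriv ?_
    have hc : Y * exp (((1 - σ : ℝ) : ℂ) • Y) = exp (((1 - σ : ℝ) : ℂ) • Y) * Y :=
      (((Commute.refl Y).smul_right (((1 - σ : ℝ)) : ℂ)).exp_right).eq
    simp only [Complex.ofReal_neg, Complex.ofReal_one, neg_smul, one_smul, mul_neg,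
      sub_mul, mul_sub, mul_assoc, hc]
    abel
  have hcont : Continuous fun σ : ℝ =>
      exp ((σ : ℂ) • X) * (X - Y) * exp (((1 - σ : ℝ) : ℂ) • Y) := by
    have c1 : Continuous fun σ : ℝ => exp ((σ : ℂ) • X) :=
      exp_continuous.comp (Complex.continuous_ofReal.smul continuous_const)
    have c2 : Continuous fun σ : ℝ => exp (((1 - σ : ℝ) : ℂ) • Y) :=
      exp_continuous.comp ((Complex.continuous_ofReal.comp
        (continuous_const.sub continuous_id)).smul continuous_const)
    exact (c1.mul continuous_const).mul c2
  have := intervalIntegral.integral_eq_sub_of_hasDerivAt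
    (fun σ _ => hF σ) (hcont.intervalIntegrable 0 1)
  rw [this]
  norm_num [exp_zero]

theorem hasDerivAt_exp_quadratic (A C D : Matrix N N ℂ) :
    HasDerivAt (fun w : ℂ => exp (A + w • C + w ^ 2 • D))
      (∫ σ in (0:ℝ)..1, exp ((σ : ℂ) • A) * C * exp (((1 - σ : ℝ) : ℂ) • A)) 0 := by
  set B : ℂ → Matrix N N ℂ := fun w => A + w • C + w ^ 2 • D with hB
  have hB0 : B 0 = A := by simp [hB]
  set G : ℂ → Matrix N N ℂ := fun w =>
    ∫ σ in (0:ℝ)..1, exp ((σ : ℂ) • B w) * (C + w • D) * exp (((1 - σ : ℝ) : ℂ) • A)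
    with hGdef
  have hG : ∀ w, exp (B w) = exp A + w • G w := by
    intro w
    have h := duhamel (B w) A
    have hsub : B w - A = w • (C + w • D) := by
      simp only [hB]
      rw [smul_add, smul_smul, ← sq]
      abel
    rw [hsub] at h
    simp only [mul_smul_comm, smul_mul_assoc] at h
    rw [intervalIntegral.integral_smul] at h
    rw [← h]
    abel
  have hGcont : Continuous G := by
    apply intervalIntegral.continuous_parametric_intervalIntegral_of_continuous'
    have cB : Continuous fun p : ℂ × ℝ => ((p.2 : ℂ)) • B p.1 := by
      apply Continuous.fun_smul
      · exact Complex.continuous_ofReal.comp continuous_snd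
      · simp only [hB]
        exact (continuous_const.add (continuous_fst.smul continuous_const)).add
          ((continuous_fst.pow 2).smul continuous_const)
    have c1 : Continuous fun p : ℂ × ℝ => exp ((p.2 : ℂ) • B p.1) := exp_continuous.comp cB
    have c2 : Continuous fun p : ℂ × ℝ => exp (((1 - p.2 : ℝ) : ℂ) • A) :=
      exp_continuous.comp ((Complex.continuous_ofReal.comp
        (continuous_const.sub continuous_snd)).smul continuous_const)
    exact (c1.mul (continuous_const.add (continuous_fst.smul continuous_const))).mul c2
  have hG0 : G 0 = ∫ σ in (0:ℝ)..1, exp ((σ : ℂ) • A) * C * exp (((1 - σ : ℝ) : ℂ) • A) := by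
    simp [hGdef, hB0]
  rw [← hG0, hasDerivAt_iff_tendsto_slope]
  have heq : ∀ w : ℂ, w ≠ 0 → slope (fun w => exp (B w)) 0 w = G w := by
    intro w hw
    rw [slope_def_module, hG w, hB0]
    simp [smul_smul, inv_mul_cancel₀ hw]
  refine Filter.Tendsto.congr' ?_ ((hGcont.tendsto 0).mono_left nhdsWithin_le_nhds)
  filter_upwards [self_mem_nhdsWithin] with w hw
  exact (heq w hw).symm

/-! ### Entry extraction -/

def entryCLM (x y : N) : Matrix N N ℂ →L[ℂ] ℂ :=
  LinearMap.toContinuousLinearMap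
    { toFun := fun M => M x y
      map_add' := fun _ _ => rfl
      map_smul' := fun _ _ => rfl }

@[simp] theorem entryCLM_apply (x y : N) (M : Matrix N N ℂ) : entryCLM x y M = M x y := rfl

theorem hasDerivAt_entry {f : ℂ → Matrix N N ℂ} {f' : Matrix N N ℂ} {w : ℂ}
    (h : HasDerivAt f f' w) (x y : N) :
    HasDerivAt (fun z => f z x y) (f' x y) w := by
  simpa [Function.comp_def] using (entryCLM x y).hasFDerivAt.comp_hasDerivAt w h

theorem entry_intervalIntegral {F : ℝ → Matrix N N ℂ} {a b : ℝ}
    (hF : IntervalIntegrable F MeasureTheory.volume a b) (x y : N) :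
    (∫ σ in a..b, F σ) x y = ∫ σ in a..b, F σ x y := by
  simpa using ((entryCLM x y).intervalIntegral_comp_comm hF).symm

theorem cont_entry {F : ℝ → Matrix N N ℂ} (h : Continuous F) (x y : N) :
    Continuous fun s => F s x y := (entryCLM x y).continuous.comp h

theorem entry_triple (A B : Matrix N N ℂ) (c d x y : N) :
    (A * (Matrix.single c d (1 : ℂ) * B)) x y = A x c * B d y := by
  rw [Matrix.mul_apply, Finset.sum_eq_single c]
  · simp
  · intro a _ ha
    rw [Matrix.single_mul_apply_of_ne (h := ha), mul_zero]
  · simp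


/-! ### Block matrix algebra -/

section Alg

theorem Jmat_mul_Jmat (n : ℕ) : Jmat n * Jmat n = 1 := by
  simp [Jmat, Matrix.fromBlocks_multiply, ← Matrix.fromBlocks_one]

theorem Jmat_transpose (n : ℕ) : (Jmat n)ᵀ = Jmat n := by
  simp [Jmat, Matrix.fromBlocks_transpose]

theorem Hgen_transpose (m n : ℕ) (Z : Fin m → Fin n → Fin n → ℝ) (q : Fin m) :
    (Hgen m n Z q)ᵀ = Jmat n * Hgen m n Z q.rev * Jmat n := by
  simp [Hgen, Jmat, Matrix.fromBlocks_transpose, Matrix.fromBlocks_multiply, Fin.rev_rev]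

theorem drop_prod_transpose (m n : ℕ) (Z : Fin m → Fin n → Fin n → ℝ) :
    ∀ k, k ≤ m → (((List.ofFn (Hgen m n Z)).drop (m - k)).prod)ᵀ =
      Jmat n * Vtake m n Z k * Jmat n := by
  intro k
  induction k with
  | zero =>
    intro _
    rw [Nat.sub_zero, List.drop_of_length_le (by simp)]
    simp [Vtake, Jmat_mul_Jmat]
  | succ k ih =>
    intro hk
    have hk' : k ≤ m := by omega
    have hL : (List.ofFn (Hgen m n Z)).length = m := by simp
    have hlt : m - (k + 1) < (List.ofFn (Hgen m n Z)).length := by omega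
    have hkl : k < (List.ofFn (Hgen m n Z)).length := by omega
    have e1 : m - (k + 1) + 1 = m - k := by omega
    rw [List.drop_eq_getElem_cons hlt, List.prod_cons, Matrix.transpose_mul, e1, ih hk',
      List.getElem_ofFn, Hgen_transpose]
    have hrev : (⟨m - (k + 1), by omega⟩ : Fin m).rev = ⟨k, by omega⟩ := by
      simp only [Fin.rev, Fin.mk.injEq]
      omega
    rw [hrev, Vtake, Vtake, List.prod_take_succ _ _ hkl, List.getElem_ofFn]
    rw [show Jmat n * (List.take k (List.ofFn (Hgen m n Z))).prod * Jmat n *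
          (Jmat n * Hgen m n Z ⟨k, by omega⟩ * Jmat n)
        = Jmat n * (List.take k (List.ofFn (Hgen m n Z))).prod * (Jmat n * Jmat n) *
          Hgen m n Z ⟨k, by omega⟩ * Jmat n by noncomm_ring,
      Jmat_mul_Jmat, mul_one]
    noncomm_ring


theorem ofFn_decomp {α : Type*} {r : ℕ} (f : Fin (r + 2) → α) :
    List.ofFn f = f 0 ::
      ((List.ofFn fun i : Fin r => f i.castSucc.succ).concat (f (Fin.last (r + 1)))) := by
  rw [List.ofFn_succ, List.ofFn_succ']
  simp [Fin.succ_last]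

variable {r n : ℕ} (Z : Fin (r + 2) → Fin n → Fin n → ℝ)

theorem Vtake_full :
    Vtake (r + 2) n Z (r + 2) =
      Hgen (r + 2) n Z 0 *
        ((List.ofFn fun i : Fin r => Hgen (r + 2) n Z i.castSucc.succ).prod *
          Hgen (r + 2) n Z (Fin.last (r + 1))) := by
  rw [Vtake, List.take_of_length_le (by simp), ofFn_decomp]
  simp [List.concat_eq_append, List.prod_append]

theorem Vtake_pred :
    Vtake (r + 2) n Z (r + 1) =
      Hgen (r + 2) n Z 0 *
        (List.ofFn fun i : Fin r => Hgen (r + 2) n Z i.castSucc.succ).prod := by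
  rw [Vtake, ofFn_decomp, List.take_succ_cons, List.concat_eq_append,
    List.take_left' (by simp), List.prod_cons]

theorem drop_one_prod :
    ((List.ofFn (Hgen (r + 2) n Z)).drop 1).prod =
      (List.ofFn fun i : Fin r => Hgen (r + 2) n Z i.castSucc.succ).prod *
        Hgen (r + 2) n Z (Fin.last (r + 1)) := by
  rw [ofFn_decomp (Hgen (r + 2) n Z)]
  simp [List.concat_eq_append, List.prod_append]

theorem hatVm_symm : (hatVm (r + 2) n Z)ᵀ = hatVm (r + 2) n Z := by
  have h := drop_prod_transpose (r + 2) n Z (r + 2) le_rfl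
  rw [Nat.sub_self, List.drop_zero] at h
  rw [hatVm, Matrix.transpose_mul, Jmat_transpose]
  rw [show Vtake (r + 2) n Z (r + 2) = ((List.ofFn (Hgen (r + 2) n Z))).prod from by
    rw [Vtake, List.take_of_length_le (by simp)]]
  rw [h]
  rw [show Jmat n * (Jmat n * Vtake (r + 2) n Z (r + 2) * Jmat n)
      = (Jmat n * Jmat n) * Vtake (r + 2) n Z (r + 2) * Jmat n by noncomm_ring,
    Jmat_mul_Jmat, one_mul]
  rw [show Vtake (r + 2) n Z (r + 2) = ((List.ofFn (Hgen (r + 2) n Z))).prod from by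
    rw [Vtake, List.take_of_length_le (by simp)]]

theorem tail_prod_J_transpose :
    (((List.ofFn fun i : Fin r => Hgen (r + 2) n Z i.castSucc.succ).prod *
        Hgen (r + 2) n Z (Fin.last (r + 1))) * Jmat n)ᵀ =
      Vtake (r + 2) n Z (r + 1) * Jmat n := by
  have h := drop_prod_transpose (r + 2) n Z (r + 1) (by omega)
  rw [show r + 2 - (r + 1) = 1 by omega, drop_one_prod] at h
  rw [Matrix.transpose_mul, Jmat_transpose, h]
  rw [show Jmat n * (Jmat n * Vtake (r + 2) n Z (r + 1) * Jmat n)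
      = (Jmat n * Jmat n) * Vtake (r + 2) n Z (r + 1) * Jmat n by noncomm_ring,
    Jmat_mul_Jmat, one_mul]


variable (j k : Fin n)

theorem repEntry_base : repEntry (r + 2) n Z 0 j k (Z 0 j k) = Z := by
  funext q a b
  simp only [repEntry]
  split_ifs with h
  · obtain ⟨rfl, rfl, rfl⟩ := h
    rfl
  · rfl

theorem repEntry_ne {q : Fin (r + 2)} (hq : q ≠ 0) (u : ℝ) :
    repEntry (r + 2) n Z 0 j k u q = Z q := by
  funext a b
  simp [repEntry, hq]

theorem rev_ne_zero {q : Fin (r + 2)} (hq : q ≠ Fin.last (r + 1)) : q.rev ≠ 0 := by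
  intro h
  apply hq
  have := congrArg Fin.rev h
  rwa [Fin.rev_rev, Fin.rev_zero] at this

theorem Hgen_repEntry_mid (u : ℝ) (i : Fin r) :
    Hgen (r + 2) n (repEntry (r + 2) n Z 0 j k u) i.castSucc.succ =
      Hgen (r + 2) n Z i.castSucc.succ := by
  have h1 : (i.castSucc.succ : Fin (r + 2)) ≠ 0 := Fin.succ_ne_zero _
  have h2 : (i.castSucc.succ : Fin (r + 2)) ≠ Fin.last (r + 1) := by
    simp only [ne_eq, Fin.ext_iff, Fin.val_succ, Fin.coe_castSucc, Fin.val_last]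
    omega
  rw [Hgen, Hgen, repEntry_ne Z j k h1, repEntry_ne Z j k (rev_ne_zero h2)]

theorem Hgen_repEntry_zero (u : ℝ) :
    Hgen (r + 2) n (repEntry (r + 2) n Z 0 j k u) 0 =
      Hgen (r + 2) n Z 0 + ((u - Z 0 j k) * (Real.sqrt n)⁻¹) •
        Matrix.single (Sum.inl j) (Sum.inl k) (1 : ℝ) := by
  have hrev : (0 : Fin (r + 2)).rev ≠ 0 := by
    apply rev_ne_zero
    simp only [ne_eq, Fin.ext_iff, Fin.val_zero, Fin.val_last]
    omega
  have hne : ∀ a b, repEntry (r + 2) n Z 0 j k u ((0 : Fin (r+2)).rev) a b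
      = Z ((0 : Fin (r+2)).rev) a b := by
    intro a b; simp [repEntry, hrev]
  ext (a|a) (b|b) <;>
    simp only [Hgen, repEntry, hne, Matrix.add_apply, Matrix.smul_apply,
      Matrix.fromBlocks_apply₁₁, Matrix.fromBlocks_apply₁₂, Matrix.fromBlocks_apply₂₁,
      Matrix.fromBlocks_apply₂₂, Matrix.single, Matrix.of_apply,
      Matrix.transpose_apply, Matrix.zero_apply, smul_eq_mul] <;>
    split_ifs <;> simp_all <;> ring

theorem Hgen_repEntry_last (u : ℝ) :
    Hgen (r + 2) n (repEntry (r + 2) n Z 0 j k u) (Fin.last (r + 1)) =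
      Hgen (r + 2) n Z (Fin.last (r + 1)) + ((u - Z 0 j k) * (Real.sqrt n)⁻¹) •
        Matrix.single (Sum.inr k) (Sum.inr j) (1 : ℝ) := by
  have hlast : (Fin.last (r + 1) : Fin (r + 2)) ≠ 0 := by
    simp only [ne_eq, Fin.ext_iff, Fin.val_zero, Fin.val_last]
    omega
  have hrev : (Fin.last (r + 1)).rev = (0 : Fin (r + 2)) := Fin.rev_last _
  have hne : ∀ a b, repEntry (r + 2) n Z 0 j k u (Fin.last (r + 1)) a b
      = Z (Fin.last (r + 1)) a b := by
    intro a b; simp [repEntry, hlast]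
  ext (a|a) (b|b) <;>
    simp only [Hgen, repEntry, hne, hrev, Matrix.add_apply, Matrix.smul_apply,
      Matrix.fromBlocks_apply₁₁, Matrix.fromBlocks_apply₁₂, Matrix.fromBlocks_apply₂₁,
      Matrix.fromBlocks_apply₂₂, Matrix.single, Matrix.of_apply,
      Matrix.transpose_apply, Matrix.zero_apply, smul_eq_mul] <;>
    split_ifs <;> simp_all <;> ring

theorem expand_aux {ι : Type*} [Fintype ι] [DecidableEq ι]
    (H0 W Hl P Q J : Matrix ι ι ℝ) (δ : ℝ) :
    (H0 + δ • P) * (W * (Hl + δ • Q)) * J =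
      H0 * (W * Hl) * J + δ • ((P * (W * Hl) + H0 * W * Q) * J) +
        δ ^ 2 • (P * W * Q * J) := by
  simp only [mul_add, add_mul, smul_mul_assoc, mul_smul_comm, smul_smul, smul_add, mul_assoc, sq]
  abel

theorem hatVm_repEntry (u : ℝ) :
    hatVm (r + 2) n (repEntry (r + 2) n Z 0 j k u) =
      hatVm (r + 2) n Z
      + ((u - Z 0 j k) * (Real.sqrt n)⁻¹) •
          ((Matrix.single (Sum.inl j) (Sum.inl k) (1 : ℝ) *
              ((List.ofFn fun i : Fin r => Hgen (r + 2) n Z i.castSucc.succ).prod *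
                Hgen (r + 2) n Z (Fin.last (r + 1))) +
            Hgen (r + 2) n Z 0 *
                (List.ofFn fun i : Fin r => Hgen (r + 2) n Z i.castSucc.succ).prod *
              Matrix.single (Sum.inr k) (Sum.inr j) (1 : ℝ)) * Jmat n)
      + ((u - Z 0 j k) * (Real.sqrt n)⁻¹) ^ 2 •
          (Matrix.single (Sum.inl j) (Sum.inl k) (1 : ℝ) *
              (List.ofFn fun i : Fin r => Hgen (r + 2) n Z i.castSucc.succ).prod *
            Matrix.single (Sum.inr k) (Sum.inr j) (1 : ℝ) * Jmat n) := by
  rw [hatVm, Vtake_full, hatVm, Vtake_full]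
  simp only [Hgen_repEntry_mid Z j k u, Hgen_repEntry_zero Z j k u, Hgen_repEntry_last Z j k u]
  exact expand_aux _ _ _ _ _ _ _

end Alg


/-! ### Complexification -/

section Cx

theorem mapC_mul {ι : Type*} [Fintype ι] (A B : Matrix ι ι ℝ) :
    (A * B).map Complex.ofReal = A.map Complex.ofReal * B.map Complex.ofReal := by
  ext a b
  simp [Matrix.map_apply, Matrix.mul_apply]

theorem mapC_add {ι : Type*} (A B : Matrix ι ι ℝ) :
    (A + B).map Complex.ofReal = A.map Complex.ofReal + B.map Complex.ofReal := by
  ext a b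
  simp [Matrix.map_apply]

theorem mapC_std {ι : Type*} [DecidableEq ι] (c d : ι) :
    (Matrix.single c d (1 : ℝ)).map Complex.ofReal =
      Matrix.single c d (1 : ℂ) := by
  ext a b
  simp [Matrix.single, Matrix.map_apply, apply_ite]

variable {r n : ℕ} (Z : Fin (r + 2) → Fin n → Fin n → ℝ)

theorem Jc_left_apply (M : Matrix (Fin n ⊕ Fin n) (Fin n ⊕ Fin n) ℂ) (a : Fin n)
    (y : Fin n ⊕ Fin n) :
    ((Jmat n).map Complex.ofReal * M) (Sum.inr a) y = M (Sum.inl a) y := by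
  simp [Matrix.mul_apply, Fintype.sum_sum_type, Jmat, Matrix.map_apply, Matrix.one_apply,
    apply_ite, ite_mul]

theorem Jc_right_apply (Y : Matrix (Fin n ⊕ Fin n) (Fin n ⊕ Fin n) ℂ) (b : Fin n ⊕ Fin n)
    (a : Fin n) :
    (Y * (Jmat n).map Complex.ofReal) b (Sum.inl a) = Y b (Sum.inr a) := by
  simp [Matrix.mul_apply, Fintype.sum_sum_type, Jmat, Matrix.map_apply, Matrix.one_apply,
    apply_ite, mul_ite]

theorem UexpM_symm (s : ℝ) : (UexpM (r + 2) n Z s)ᵀ = UexpM (r + 2) n Z s := by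
  have h : ((Complex.I * (s : ℂ)) • (hatVm (r + 2) n Z).map Complex.ofReal)ᵀ
      = (Complex.I * (s : ℂ)) • (hatVm (r + 2) n Z).map Complex.ofReal := by
    rw [Matrix.transpose_smul, ← Matrix.transpose_map, hatVm_symm]
  rw [UexpM, ← Matrix.exp_transpose, h]

theorem UexpM_apply_symm (s : ℝ) (a b : Fin n ⊕ Fin n) :
    UexpM (r + 2) n Z s a b = UexpM (r + 2) n Z s b a := by
  conv_rhs => rw [← UexpM_symm Z s]
  rfl

variable (j k : Fin n)

theorem Phi_entry (s s' : ℝ) (x y : Fin n ⊕ Fin n) :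
    (UexpM (r + 2) n Z s *
        (((Matrix.single (Sum.inl j) (Sum.inl k) (1 : ℝ) *
              ((List.ofFn fun i : Fin r => Hgen (r + 2) n Z i.castSucc.succ).prod *
                Hgen (r + 2) n Z (Fin.last (r + 1))) +
            Hgen (r + 2) n Z 0 *
                (List.ofFn fun i : Fin r => Hgen (r + 2) n Z i.castSucc.succ).prod *
              Matrix.single (Sum.inr k) (Sum.inr j) (1 : ℝ)) * Jmat n).map
          Complex.ofReal) *
      UexpM (r + 2) n Z s') x y
    = UexpM (r + 2) n Z s x (Sum.inl j) *
        (UexpM (r + 2) n Z s' * (Vtake (r + 2) n Z (r + 1)).map Complex.ofReal) y (Sum.inr k)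
      + (UexpM (r + 2) n Z s * (Vtake (r + 2) n Z (r + 1)).map Complex.ofReal) x (Sum.inr k) *
          UexpM (r + 2) n Z s' y (Sum.inl j) := by
  set U := UexpM (r + 2) n Z s with hU
  set U' := UexpM (r + 2) n Z s' with hU'
  set Wc := ((List.ofFn fun i : Fin r => Hgen (r + 2) n Z i.castSucc.succ).prod).map
    Complex.ofReal with hWc
  set H0c := (Hgen (r + 2) n Z 0).map Complex.ofReal with hH0c
  set Hlc := (Hgen (r + 2) n Z (Fin.last (r + 1))).map Complex.ofReal with hHlc
  set Jc := (Jmat n).map Complex.ofReal with hJc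
  set Vc := (Vtake (r + 2) n Z (r + 1)).map Complex.ofReal with hVc
  have hVfact : Vc = H0c * Wc := by
    rw [hVc, Vtake_pred, mapC_mul]
  have hexpand :
      U * (((Matrix.single (Sum.inl j) (Sum.inl k) (1 : ℝ) *
              ((List.ofFn fun i : Fin r => Hgen (r + 2) n Z i.castSucc.succ).prod *
                Hgen (r + 2) n Z (Fin.last (r + 1))) +
            Hgen (r + 2) n Z 0 *
                (List.ofFn fun i : Fin r => Hgen (r + 2) n Z i.castSucc.succ).prod *
              Matrix.single (Sum.inr k) (Sum.inr j) (1 : ℝ)) * Jmat n).map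
          Complex.ofReal) * U'
      = U * (Matrix.single (Sum.inl j) (Sum.inl k) (1 : ℂ) *
            ((Wc * Hlc * Jc) * U')) +
        (U * Vc) * (Matrix.single (Sum.inr k) (Sum.inr j) (1 : ℂ) * (Jc * U')) := by
    rw [mapC_mul, mapC_add, mapC_mul, mapC_mul, mapC_mul, mapC_mul, mapC_std, mapC_std, hVfact]
    rw [← hWc, ← hH0c, ← hHlc, ← hJc]
    noncomm_ring
  rw [hexpand, Matrix.add_apply, entry_triple, entry_triple]
  have hWHl : Wc * Hlc * Jc = (Vc * Jc)ᵀ := by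
    have h := tail_prod_J_transpose Z
    have h2 : (List.ofFn fun i : Fin r => Hgen (r + 2) n Z i.castSucc.succ).prod *
        Hgen (r + 2) n Z (Fin.last (r + 1)) * Jmat n =
        (Vtake (r + 2) n Z (r + 1) * Jmat n)ᵀ := by
      rw [← h, Matrix.transpose_transpose]
    calc Wc * Hlc * Jc
        = ((List.ofFn fun i : Fin r => Hgen (r + 2) n Z i.castSucc.succ).prod *
            Hgen (r + 2) n Z (Fin.last (r + 1)) * Jmat n).map Complex.ofReal := by
          rw [mapC_mul, mapC_mul]
      _ = ((Vtake (r + 2) n Z (r + 1) * Jmat n)ᵀ).map Complex.ofReal := by rw [h2]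
      _ = (Vc * Jc)ᵀ := by rw [Matrix.transpose_map, mapC_mul]
  have hterm1 : ((Wc * Hlc * Jc) * U') (Sum.inl k) y = (U' * Vc) y (Sum.inr k) := by
    rw [Matrix.mul_apply, Matrix.mul_apply]
    refine Finset.sum_congr rfl fun b _ => ?_
    rw [hWHl, Matrix.transpose_apply, Jc_right_apply, hU', UexpM_apply_symm Z s' b y, mul_comm]
  have hterm2 : (Jc * U') (Sum.inr j) y = U' y (Sum.inl j) := by
    rw [Jc_left_apply, hU', UexpM_apply_symm Z s' (Sum.inl j) y]
  rw [hterm1, hterm2]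

end Cx

end RMTaux

attribute [local instance] Matrix.linftyOpNormedAddCommGroup Matrix.linftyOpNormedRing
  Matrix.linftyOpNormedAlgebra
attribute [-instance] instTopologicalSpaceMatrix Matrix.instUniformSpace

open RMTaux NormedSpace in
/-- Derivative of the unitary group `U(t) = e^{itV̂}` with respect to the matrix entry
`Z^{(1)}_{jk}`:
`[∂U(t)/∂Z^{(1)}_{jk}]_{x,y} = (i/√n) ∫₀ᵗ ([U(s)V_{[1,m−1]}]_{x,k+n}[U(t−s)]_{y,j}
  + [U(s)V_{[1,m−1]}]_{y,k+n}[U(t−s)]_{x,j}) ds`. -/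
theorem deriv_Uexp_entry_first_layer
    (m n : ℕ) (hm : 2 ≤ m) (hn : 0 < n)
    (Z : Fin m → Fin n → Fin n → ℝ) (j k : Fin n) (x y : Fin n ⊕ Fin n) (t : ℝ) :
    deriv (fun u : ℝ =>
        UexpM m n (repEntry m n Z ⟨0, by omega⟩ j k u) t x y) (Z ⟨0, by omega⟩ j k) =
      (Complex.I / (Real.sqrt n : ℂ)) *
        ∫ s in (0:ℝ)..t,
          ((UexpM m n Z s * (Vtake m n Z (m - 1)).map Complex.ofReal) x (Sum.inr k) *
              UexpM m n Z (t - s) y (Sum.inl j) +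
            (UexpM m n Z s * (Vtake m n Z (m - 1)).map Complex.ofReal) y (Sum.inr k) *
              UexpM m n Z (t - s) x (Sum.inl j)) := by
  obtain ⟨r, rfl⟩ : ∃ r, m = r + 2 := ⟨m - 2, by omega⟩
  have hq0 : (⟨0, by omega⟩ : Fin (r + 2)) = 0 := by
    ext
    simp
  have hm1 : r + 2 - 1 = r + 1 := rfl
  simp only [hq0, hm1]
  set u₀ := Z 0 j k with hu₀
  set Vmc := (Vtake (r + 2) n Z (r + 1)).map Complex.ofReal with hVmc
  set Creal := (Matrix.single (Sum.inl j) (Sum.inl k) (1 : ℝ) *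
        ((List.ofFn fun i : Fin r => Hgen (r + 2) n Z i.castSucc.succ).prod *
          Hgen (r + 2) n Z (Fin.last (r + 1))) +
      Hgen (r + 2) n Z 0 * (List.ofFn fun i : Fin r => Hgen (r + 2) n Z i.castSucc.succ).prod *
        Matrix.single (Sum.inr k) (Sum.inr j) (1 : ℝ)) * Jmat n with hCreal
  set Dreal := Matrix.single (Sum.inl j) (Sum.inl k) (1 : ℝ) *
      (List.ofFn fun i : Fin r => Hgen (r + 2) n Z i.castSucc.succ).prod *
      Matrix.single (Sum.inr k) (Sum.inr j) (1 : ℝ) * Jmat n with hDreal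
  set B₀ := (Complex.I * (t : ℂ)) • (hatVm (r + 2) n Z).map Complex.ofReal with hB₀
  set C' := (Complex.I * (t : ℂ) * (((Real.sqrt n)⁻¹ : ℝ) : ℂ)) • Creal.map Complex.ofReal
    with hC'
  set D' := (Complex.I * (t : ℂ) * ((((Real.sqrt n)⁻¹ : ℝ) : ℂ)) ^ 2) • Dreal.map Complex.ofReal
    with hD'
  -- the perturbed generator is quadratic in `u`
  have key : ∀ u : ℝ,
      (Complex.I * (t : ℂ)) • (hatVm (r + 2) n (repEntry (r + 2) n Z 0 j k u)).map
          Complex.ofReal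
        = B₀ + ((u : ℂ) - (u₀ : ℂ)) • C' + ((u : ℂ) - (u₀ : ℂ)) ^ 2 • D' := by
    intro u
    rw [hatVm_repEntry Z j k u]
    ext a b
    simp only [hB₀, hC', hD', ← hu₀, Matrix.map_apply, Matrix.add_apply, Matrix.smul_apply,
      smul_eq_mul]
    push_cast
    ring
  -- the derivative via the Duhamel formula
  have hmain := hasDerivAt_exp_quadratic B₀ C' D'
  set K := ∫ σ in (0:ℝ)..1, exp ((σ : ℂ) • B₀) * C' * exp (((1 - σ : ℝ) : ℂ) • B₀) with hK
  have hg : HasDerivAt (fun w : ℂ => exp (B₀ + w • C' + w ^ 2 • D')) K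
      ((u₀ : ℂ) - (u₀ : ℂ)) := by
    rw [sub_self]
    exact hmain
  have hshift : HasDerivAt
      (fun z : ℂ => exp (B₀ + (z - (u₀ : ℂ)) • C' + (z - (u₀ : ℂ)) ^ 2 • D')) K (u₀ : ℂ) := by
    have hin : HasDerivAt (fun z : ℂ => z - (u₀ : ℂ)) 1 (u₀ : ℂ) :=
      (hasDerivAt_id _).sub_const _
    have := hg.scomp (h := fun z : ℂ => z - (u₀ : ℂ)) (u₀ : ℂ) hin
    exact this.congr_deriv (one_smul _ _)
  have hreal : HasDerivAt
      (fun u : ℝ => exp (B₀ + ((u : ℂ) - (u₀ : ℂ)) • C' + ((u : ℂ) - (u₀ : ℂ)) ^ 2 • D') x y)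
      (K x y) u₀ := (hasDerivAt_entry hshift x y).comp_ofReal
  have hfun : (fun u : ℝ => UexpM (r + 2) n (repEntry (r + 2) n Z 0 j k u) t x y)
      = fun u : ℝ =>
        exp (B₀ + ((u : ℂ) - (u₀ : ℂ)) • C' + ((u : ℂ) - (u₀ : ℂ)) ^ 2 • D') x y := by
    funext u
    rw [UexpM, key u]
    rfl
  rw [hfun, hreal.deriv]
  -- continuity facts
  have contU : Continuous fun s : ℝ => UexpM (r + 2) n Z s := by
    simp only [UexpM]
    exact exp_continuous.comp
      ((continuous_const.mul Complex.continuous_ofReal).smul continuous_const)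
  have c1 : Continuous fun σ : ℝ => exp ((σ : ℂ) • B₀) :=
    exp_continuous.comp (Complex.continuous_ofReal.smul continuous_const)
  have c2 : Continuous fun σ : ℝ => exp (((1 - σ : ℝ) : ℂ) • B₀) :=
    exp_continuous.comp ((Complex.continuous_ofReal.comp
      (continuous_const.sub continuous_id)).smul continuous_const)
  have contInt : Continuous fun σ : ℝ =>
      exp ((σ : ℂ) • B₀) * C' * exp (((1 - σ : ℝ) : ℂ) • B₀) :=
    (c1.mul continuous_const).mul c2
  have hKxy : K x y = ∫ σ in (0:ℝ)..1,
      (exp ((σ : ℂ) • B₀) * C' * exp (((1 - σ : ℝ) : ℂ) • B₀)) x y :=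
    entry_intervalIntegral (contInt.intervalIntegrable 0 1) x y
  -- identify the two exponentials with the unitary group
  have hUs : ∀ σ : ℝ, exp ((σ : ℂ) • B₀) = UexpM (r + 2) n Z (σ * t) := by
    intro σ
    rw [hB₀, smul_smul, UexpM]
    congr 1
    push_cast
    ring
  have hUs' : ∀ σ : ℝ, exp (((1 - σ : ℝ) : ℂ) • B₀) = UexpM (r + 2) n Z (t - σ * t) := by
    intro σ
    rw [hB₀, smul_smul, UexpM]
    congr 1
    push_cast
    ring
  have hPhiE : ∀ σ : ℝ, (exp ((σ : ℂ) • B₀) * C' * exp (((1 - σ : ℝ) : ℂ) • B₀)) x y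
      = (Complex.I * (t : ℂ) * (((Real.sqrt n)⁻¹ : ℝ) : ℂ)) *
          (UexpM (r + 2) n Z (σ * t) x (Sum.inl j) *
              (UexpM (r + 2) n Z (t - σ * t) * Vmc) y (Sum.inr k) +
            (UexpM (r + 2) n Z (σ * t) * Vmc) x (Sum.inr k) *
              UexpM (r + 2) n Z (t - σ * t) y (Sum.inl j)) := by
    intro σ
    rw [hUs σ, hUs' σ, hC', hCreal, mul_smul_comm, smul_mul_assoc, Matrix.smul_apply,
      smul_eq_mul, Phi_entry Z j k (σ * t) (t - σ * t) x y]
  -- rewrite the right-hand side integral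
  have cf1 : Continuous fun s : ℝ =>
      (UexpM (r + 2) n Z s * Vmc) x (Sum.inr k) * UexpM (r + 2) n Z (t - s) y (Sum.inl j) :=
    (cont_entry (contU.mul continuous_const) x (Sum.inr k)).mul
      (cont_entry (contU.comp (continuous_const.sub continuous_id)) y (Sum.inl j))
  have cf2 : Continuous fun s : ℝ =>
      (UexpM (r + 2) n Z s * Vmc) y (Sum.inr k) * UexpM (r + 2) n Z (t - s) x (Sum.inl j) :=
    (cont_entry (contU.mul continuous_const) y (Sum.inr k)).mul
      (cont_entry (contU.comp (continuous_const.sub continuous_id)) x (Sum.inl j))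
  have cf2' : Continuous fun s : ℝ =>
      (UexpM (r + 2) n Z (t - s) * Vmc) y (Sum.inr k) * UexpM (r + 2) n Z s x (Sum.inl j) :=
    (cont_entry ((contU.comp (continuous_const.sub continuous_id)).mul continuous_const) y
        (Sum.inr k)).mul (cont_entry contU x (Sum.inl j))
  have hswap : (∫ s in (0:ℝ)..t,
        (UexpM (r + 2) n Z s * Vmc) y (Sum.inr k) * UexpM (r + 2) n Z (t - s) x (Sum.inl j))
      = ∫ s in (0:ℝ)..t,
        (UexpM (r + 2) n Z (t - s) * Vmc) y (Sum.inr k) * UexpM (r + 2) n Z s x (Sum.inl j) := by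
    have h := intervalIntegral.integral_comp_sub_left (a := 0) (b := t)
      (fun s => (UexpM (r + 2) n Z s * Vmc) y (Sum.inr k) *
        UexpM (r + 2) n Z (t - s) x (Sum.inl j)) t
    simp only [sub_sub_cancel, sub_self, sub_zero] at h
    exact h.symm
  have hsplit : (∫ s in (0:ℝ)..t,
        ((UexpM (r + 2) n Z s * Vmc) x (Sum.inr k) * UexpM (r + 2) n Z (t - s) y (Sum.inl j) +
          (UexpM (r + 2) n Z s * Vmc) y (Sum.inr k) * UexpM (r + 2) n Z (t - s) x (Sum.inl j)))
      = ∫ s in (0:ℝ)..t,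
        ((UexpM (r + 2) n Z s * Vmc) x (Sum.inr k) * UexpM (r + 2) n Z (t - s) y (Sum.inl j) +
          (UexpM (r + 2) n Z (t - s) * Vmc) y (Sum.inr k) *
            UexpM (r + 2) n Z s x (Sum.inl j)) := by
    rw [intervalIntegral.integral_add (cf1.intervalIntegrable 0 t) (cf2.intervalIntegrable 0 t),
      hswap, ← intervalIntegral.integral_add (cf1.intervalIntegrable 0 t)
        (cf2'.intervalIntegrable 0 t)]
  have hscale : (∫ s in (0:ℝ)..t,
        ((UexpM (r + 2) n Z s * Vmc) x (Sum.inr k) * UexpM (r + 2) n Z (t - s) y (Sum.inl j) +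
          (UexpM (r + 2) n Z (t - s) * Vmc) y (Sum.inr k) *
            UexpM (r + 2) n Z s x (Sum.inl j)))
      = t • ∫ σ in (0:ℝ)..1,
        ((UexpM (r + 2) n Z (t * σ) * Vmc) x (Sum.inr k) *
            UexpM (r + 2) n Z (t - t * σ) y (Sum.inl j) +
          (UexpM (r + 2) n Z (t - t * σ) * Vmc) y (Sum.inr k) *
            UexpM (r + 2) n Z (t * σ) x (Sum.inl j)) := by
    have h := intervalIntegral.smul_integral_comp_mul_left (a := 0) (b := 1)
      (fun s => (UexpM (r + 2) n Z s * Vmc) x (Sum.inr k) *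
          UexpM (r + 2) n Z (t - s) y (Sum.inl j) +
        (UexpM (r + 2) n Z (t - s) * Vmc) y (Sum.inr k) *
          UexpM (r + 2) n Z s x (Sum.inl j)) t
    simp only [mul_zero, mul_one] at h
    exact h.symm
  rw [hsplit, hscale, hKxy]
  simp only [hPhiE]
  rw [intervalIntegral.integral_const_mul]
  rw [Complex.real_smul]
  have hbr : (∫ σ in (0:ℝ)..1,
        (UexpM (r + 2) n Z (σ * t) x (Sum.inl j) *
            (UexpM (r + 2) n Z (t - σ * t) * Vmc) y (Sum.inr k) +
          (UexpM (r + 2) n Z (σ * t) * Vmc) x (Sum.inr k) *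
            UexpM (r + 2) n Z (t - σ * t) y (Sum.inl j)))
      = ∫ σ in (0:ℝ)..1,
        ((UexpM (r + 2) n Z (t * σ) * Vmc) x (Sum.inr k) *
            UexpM (r + 2) n Z (t - t * σ) y (Sum.inl j) +
          (UexpM (r + 2) n Z (t - t * σ) * Vmc) y (Sum.inr k) *
            UexpM (r + 2) n Z (t * σ) x (Sum.inl j)) := by
    refine intervalIntegral.integral_congr fun σ _ => ?_
    rw [mul_comm t σ]
    ring
  rw [hbr]
  rw [Complex.ofReal_inv]
  ring

end RMTauxSection
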